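/- Let a > 1 be real and let j < k be positive integers. Then the polynomial g(x) = x^k(a^j − 1) + x^j(1 − a^k) + a^k − a^j has exactly two positive real roots, namely x = 1 and x = a; in particular g(b) ≠ 0 for all real b > 1 with b ≠ a. -/

import Mathlib

/-- Cross-product inequality for geometric sums: for `0 < x < y` and `0 < j < k`,
`S_k(x) S_j(y) < S_j(x) S_k(y)` where `S_m(t) = ∑_{i<m} t^i`. -/
lemma geom_sum_cross_lt (x y : ℝ) (hx : 0 < x) (hxy : x < y) (j k : ℕ)
    (hj : 0 < j) (hjk : j < k) :
    (∑ i ∈ Finset.range k, x ^ i) * (∑ i ∈ Finset.range j, y ^ i) <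
      (∑ i ∈ Finset.range j, x ^ i) * (∑ i ∈ Finset.range k, y ^ i) := by
  have hy : 0 < y := hx.trans hxy
  have hsplit : ∀ t : ℝ, (∑ i ∈ Finset.range k, t ^ i)
      = (∑ i ∈ Finset.range j, t ^ i) + ∑ i ∈ Finset.Ico j k, t ^ i := by
    intro t
    rw [Finset.range_eq_Ico, ← Finset.sum_Ico_consecutive _ (Nat.zero_le j) hjk.le, Finset.range_eq_Ico]
  rw [hsplit x, hsplit y, add_mul, mul_add]
  have hkey : (∑ i ∈ Finset.Ico j k, x ^ i) * (∑ i ∈ Finset.range j, y ^ i) <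
      (∑ i ∈ Finset.range j, x ^ i) * (∑ i ∈ Finset.Ico j k, y ^ i) := by
    rw [Finset.sum_mul_sum, Finset.sum_mul_sum]
    rw [Finset.sum_comm (s := Finset.range j) (t := Finset.Ico j k)]
    apply Finset.sum_lt_sum_of_nonempty
    · exact Finset.nonempty_Ico.mpr hjk
    · intro i hi
      apply Finset.sum_lt_sum_of_nonempty
      · exact Finset.nonempty_range_iff.mpr hj.ne'
      · intro l hl
        have hli : l < i := lt_of_lt_of_le (Finset.mem_range.mp hl) (Finset.mem_Ico.mp hi).1
        have h1 : x ^ i * y ^ l = (x ^ l * y ^ l) * x ^ (i - l) := by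
          rw [mul_comm (x ^ l), mul_assoc, ← pow_add, Nat.add_sub_cancel' hli.le, mul_comm]
        have h2 : x ^ l * y ^ i = (x ^ l * y ^ l) * y ^ (i - l) := by
          rw [mul_assoc, ← pow_add, Nat.add_sub_cancel' hli.le]
        rw [h1, h2]
        apply mul_lt_mul_of_pos_left _ (by positivity)
        exact pow_lt_pow_left₀ hxy hx.le (Nat.sub_ne_zero_of_lt hli)
  linarith

/-- Factorization of `g`. -/
lemma g_factor (a x : ℝ) (j k : ℕ) :
    x ^ k * (a ^ j - 1) + x ^ j * (1 - a ^ k) + a ^ k - a ^ j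
      = (x - 1) * (a - 1) *
        ((∑ i ∈ Finset.range k, x ^ i) * (∑ i ∈ Finset.range j, a ^ i)
          - (∑ i ∈ Finset.range j, x ^ i) * (∑ i ∈ Finset.range k, a ^ i)) := by
  have h1 := geom_sum_mul x k
  have h2 := geom_sum_mul x j
  have h3 := geom_sum_mul a k
  have h4 := geom_sum_mul a j
  linear_combination (-((∑ i ∈ Finset.range j, a ^ i) * (a - 1))) * h1 - (x ^ k - 1) * h4
    + ((∑ i ∈ Finset.range k, a ^ i) * (a - 1)) * h2 + (x ^ j - 1) * h3

theorem g_positive_roots (a : ℝ) (ha : 1 < a) (j k : ℕ) (hj : 0 < j) (hjk : j < k) :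
    (∀ x : ℝ, 0 < x →
      (x ^ k * (a ^ j - 1) + x ^ j * (1 - a ^ k) + a ^ k - a ^ j = 0 ↔ x = 1 ∨ x = a)) ∧
    ∀ b : ℝ, 1 < b → b ≠ a →
      b ^ k * (a ^ j - 1) + b ^ j * (1 - a ^ k) + a ^ k - a ^ j ≠ 0 := by
  have ha0 : (0:ℝ) < a := lt_trans one_pos ha
  have main : ∀ x : ℝ, 0 < x →
      (x ^ k * (a ^ j - 1) + x ^ j * (1 - a ^ k) + a ^ k - a ^ j = 0 ↔ x = 1 ∨ x = a) := by
    intro x hx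
    rw [g_factor]
    constructor
    · intro h
      by_contra hcon
      push_neg at hcon
      obtain ⟨h1, hA⟩ := hcon
      have hx1 : x - 1 ≠ 0 := sub_ne_zero.mpr h1
      have ha1 : a - 1 ≠ 0 := sub_ne_zero.mpr (ne_of_gt ha)
      have hN : (∑ i ∈ Finset.range k, x ^ i) * (∑ i ∈ Finset.range j, a ^ i)
          - (∑ i ∈ Finset.range j, x ^ i) * (∑ i ∈ Finset.range k, a ^ i) ≠ 0 := by
        rcases lt_or_gt_of_ne hA with hlt | hgt
        · exact ne_of_lt (sub_neg.mpr (geom_sum_cross_lt x a hx hlt j k hj hjk))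
        · have h' := geom_sum_cross_lt a x ha0 hgt j k hj hjk
          apply ne_of_gt; nlinarith [h']
      exact hN (by
        rcases mul_eq_zero.mp h with h' | h'
        · rcases mul_eq_zero.mp h' with h'' | h''
          · exact absurd h'' hx1
          · exact absurd h'' ha1
        · exact h')
    · rintro (rfl | rfl)
      · simp
      · rw [mul_comm (∑ i ∈ Finset.range k, x ^ i)]; simp
  refine ⟨main, fun b hb hba h => ?_⟩
  rcases (main b (lt_trans one_pos hb)).mp h with h1 | h2
  · exact absurd h1 (ne_of_gt hb)
  · exact hba h2
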